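/- Let M, N be probability measures such that E_{e^ε}(M‖N) = 0 and E_{e^ε}(N‖M) = 0 for some ε > 0. Then χ²(M‖N) ≤ e^{-ε}(e^ε-1)(e^ε+1)·TV(M,N), and consequently χ²(M‖N) ≤ e^{-ε}(e^ε-1)², since TV(M,N) ≤ (e^ε-1)/(e^ε+1) under these constraints. -/

import Mathlib

open MeasureTheory

lemma aux_key (e a b : ℝ) (he : 1 < e) (ha : 0 ≤ a) (hb : 0 ≤ b)
    (h1 : a ≤ e * b) (h2 : b ≤ e * a) :
    (a - b) ^ 2 / b ≤ (e - 1) * max (a - b) 0 + (1 - e⁻¹) * max (b - a) 0 := by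
  have he0 : 0 < e := lt_trans one_pos he
  rcases eq_or_lt_of_le hb with hb0 | hb0
  · have ha0 : a = 0 := le_antisymm (by nlinarith) ha
    simp [← hb0, ha0]
  · have h3 : e⁻¹ * b ≤ a := by
      rw [inv_mul_le_iff₀ he0]; linarith
    have hie : e⁻¹ < 1 := by
      rw [inv_lt_one_iff₀]; right; exact he
    rcases le_total b a with hba | hab
    · rw [max_eq_left (by linarith), max_eq_right (by linarith), div_le_iff₀ hb0]
      nlinarith
    · rw [max_eq_right (by linarith), max_eq_left (by linarith), div_le_iff₀ hb0]
      nlinarith [mul_le_mul_of_nonneg_right h3 (sub_nonneg.2 hab)]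

lemma aux_tv (e a b : ℝ) (he : 1 < e) (ha : 0 ≤ a) (hb : 0 ≤ b)
    (h1 : a ≤ e * b) (h2 : b ≤ e * a) :
    |a - b| ≤ (1 - e⁻¹) / 2 * (a + b + |a - b|) := by
  have he0 : 0 < e := lt_trans one_pos he
  have h3 : e⁻¹ * b ≤ a := by rw [inv_mul_le_iff₀ he0]; linarith
  have h4 : e⁻¹ * a ≤ b := by rw [inv_mul_le_iff₀ he0]; linarith
  have hie : e⁻¹ < 1 := by rw [inv_lt_one_iff₀]; right; exact he
  rcases le_total b a with hba | hab
  · rw [abs_of_nonneg (by linarith)]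
    nlinarith
  · rw [abs_of_nonpos (by linarith)]
    nlinarith

/-- If E_{e^ε}(M‖N) = 0 and E_{e^ε}(N‖M) = 0, then
χ²(M‖N) ≤ e^{-ε}(e^ε-1)(e^ε+1)·TV(M,N), and consequently
χ²(M‖N) ≤ e^{-ε}(e^ε-1)² (since TV(M,N) ≤ (e^ε-1)/(e^ε+1)). Here M, N are
probability measures with densities f, g w.r.t. μ, χ²(M‖N) = ∫ (f-g)²/g dμ,
E_γ(M‖N) = ∫ (f - γ g)₊ dμ, and TV(M,N) = (1/2)∫ |f - g| dμ. -/
theorem stmt7 {α : Type*} [MeasurableSpace α] (μ : Measure α) (f g : α → ℝ)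
    (hf : Measurable f) (hg : Measurable g)
    (hf0 : ∀ x, 0 ≤ f x) (hg0 : ∀ x, 0 ≤ g x)
    (hfi : Integrable f μ) (hgi : Integrable g μ)
    (hf1 : ∫ x, f x ∂μ = 1) (hg1 : ∫ x, g x ∂μ = 1)
    (ε : ℝ) (hε : 0 < ε)
    (hMN : ∫ x, max (f x - Real.exp ε * g x) 0 ∂μ = 0)
    (hNM : ∫ x, max (g x - Real.exp ε * f x) 0 ∂μ = 0) :
    (∫ x, (f x - g x) ^ 2 / g x ∂μ)
        ≤ Real.exp (-ε) * (Real.exp ε - 1) * (Real.exp ε + 1)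
            * ((1 / 2) * ∫ x, |f x - g x| ∂μ)
    ∧ (∫ x, (f x - g x) ^ 2 / g x ∂μ) ≤ Real.exp (-ε) * (Real.exp ε - 1) ^ 2 := by
  set e := Real.exp ε with hedef
  have he : 1 < e := by
    rw [hedef]; exact Real.one_lt_exp_iff.2 hε
  have he0 : 0 < e := lt_trans one_pos he
  have hneg : Real.exp (-ε) = e⁻¹ := by rw [Real.exp_neg]
  -- a.e. domination from zero integrals
  have hint1 : Integrable (fun x => max (f x - e * g x) 0) μ :=
    (hfi.sub (hgi.const_mul e)).pos_part
  have hint2 : Integrable (fun x => max (g x - e * f x) 0) μ :=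
    (hgi.sub (hfi.const_mul e)).pos_part
  have hae1 : ∀ᵐ x ∂μ, f x ≤ e * g x := by
    have := (integral_eq_zero_iff_of_nonneg
      (fun x => le_max_right _ 0) hint1).1 hMN
    filter_upwards [this] with x hx
    simp only [Pi.zero_apply] at hx
    have h := le_max_left (f x - e * g x) 0
    rw [hx] at h
    linarith
  have hae2 : ∀ᵐ x ∂μ, g x ≤ e * f x := by
    have := (integral_eq_zero_iff_of_nonneg
      (fun x => le_max_right _ 0) hint2).1 hNM
    filter_upwards [this] with x hx
    simp only [Pi.zero_apply] at hx
    have h := le_max_left (g x - e * f x) 0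
    rw [hx] at h
    linarith
  -- integrability of positive parts
  have hPint : Integrable (fun x => max (f x - g x) 0) μ := (hfi.sub hgi).pos_part
  have hQint : Integrable (fun x => max (g x - f x) 0) μ := (hgi.sub hfi).pos_part
  have habsint : Integrable (fun x => |f x - g x|) μ := (hfi.sub hgi).abs
  -- P = Q = T
  set S := ∫ x, |f x - g x| ∂μ with hSdef
  have hPQ0 : (∫ x, max (f x - g x) 0 ∂μ) - (∫ x, max (g x - f x) 0 ∂μ) = 0 := by
    rw [← integral_sub hPint hQint]
    have : ∀ x, max (f x - g x) 0 - max (g x - f x) 0 = f x - g x := by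
      intro x; rcases le_total (f x) (g x) with h | h
      · rw [max_eq_right (by linarith), max_eq_left (by linarith)]; ring
      · rw [max_eq_left (by linarith), max_eq_right (by linarith)]; ring
    simp_rw [this]
    rw [integral_sub hfi hgi, hf1, hg1]; ring
  have hPQS : (∫ x, max (f x - g x) 0 ∂μ) + (∫ x, max (g x - f x) 0 ∂μ) = S := by
    rw [← integral_add hPint hQint]
    have : ∀ x, max (f x - g x) 0 + max (g x - f x) 0 = |f x - g x| := by
      intro x; rcases le_total (f x) (g x) with h | h
      · rw [max_eq_right (by linarith), max_eq_left (by linarith),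
          abs_of_nonpos (by linarith)]; ring
      · rw [max_eq_left (by linarith), max_eq_right (by linarith),
          abs_of_nonneg (by linarith)]; ring
    simp_rw [this]
    rfl
  have hP : (∫ x, max (f x - g x) 0 ∂μ) = S / 2 := by linarith
  have hQ : (∫ x, max (g x - f x) 0 ∂μ) = S / 2 := by linarith
  have hS0 : 0 ≤ S := integral_nonneg fun x => abs_nonneg _
  -- χ² bound
  have hBint : Integrable (fun x => (e - 1) * max (f x - g x) 0
      + (1 - e⁻¹) * max (g x - f x) 0) μ :=
    (hPint.const_mul _).add (hQint.const_mul _)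
  have hptwise : ∀ᵐ x ∂μ, (f x - g x) ^ 2 / g x
      ≤ (e - 1) * max (f x - g x) 0 + (1 - e⁻¹) * max (g x - f x) 0 := by
    filter_upwards [hae1, hae2] with x h1 h2
    exact aux_key e (f x) (g x) he (hf0 x) (hg0 x) h1 h2
  have hχmeas : AEStronglyMeasurable (fun x => (f x - g x) ^ 2 / g x) μ :=
    (((hf.sub hg).pow_const 2).div hg).aestronglyMeasurable
  have hχnn : ∀ x, 0 ≤ (f x - g x) ^ 2 / g x :=
    fun x => div_nonneg (sq_nonneg _) (hg0 x)
  have hχint : Integrable (fun x => (f x - g x) ^ 2 / g x) μ := by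
    refine hBint.mono' hχmeas ?_
    filter_upwards [hptwise] with x hx
    rw [Real.norm_eq_abs, abs_of_nonneg (hχnn x)]
    exact hx
  have hχle : (∫ x, (f x - g x) ^ 2 / g x ∂μ)
      ≤ (e - 1) * (S / 2) + (1 - e⁻¹) * (S / 2) := by
    calc (∫ x, (f x - g x) ^ 2 / g x ∂μ)
        ≤ ∫ x, ((e - 1) * max (f x - g x) 0 + (1 - e⁻¹) * max (g x - f x) 0) ∂μ :=
          integral_mono_ae hχint hBint hptwise
      _ = (e - 1) * (S / 2) + (1 - e⁻¹) * (S / 2) := by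
          rw [integral_add (hPint.const_mul _) (hQint.const_mul _),
            integral_const_mul, integral_const_mul, hP, hQ]
  have hfirst : (∫ x, (f x - g x) ^ 2 / g x ∂μ)
      ≤ Real.exp (-ε) * (e - 1) * (e + 1) * ((1 / 2) * S) := by
    rw [hneg]
    have : e⁻¹ * (e - 1) * (e + 1) * ((1 / 2) * S)
        = (e - 1) * (S / 2) + (1 - e⁻¹) * (S / 2) := by
      field_simp
    rw [this]; exact hχle
  refine ⟨hfirst, ?_⟩
  -- TV bound: S ≤ (1 - e⁻¹)/2 * (2 + S)
  have htvpt : ∀ᵐ x ∂μ, |f x - g x|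
      ≤ (1 - e⁻¹) / 2 * (f x + g x + |f x - g x|) := by
    filter_upwards [hae1, hae2] with x h1 h2
    exact aux_tv e (f x) (g x) he (hf0 x) (hg0 x) h1 h2
  have hSle : S ≤ (1 - e⁻¹) / 2 * (2 + S) := by
    have hint : Integrable (fun x => (1 - e⁻¹) / 2 * (f x + g x + |f x - g x|)) μ :=
      ((hfi.add hgi).add habsint).const_mul _
    have := integral_mono_ae habsint hint htvpt
    rw [integral_const_mul,
      integral_add (f := fun a => f a + g a) (g := fun a => |f a - g a|)
        (hfi.add hgi) habsint,
      integral_add hfi hgi, hf1, hg1] at this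
    convert this using 2
    · rfl
    rw [hSdef]; ring
  have hTle : S / 2 ≤ (e - 1) / (e + 1) := by
    have hie : e⁻¹ * e = 1 := inv_mul_cancel₀ (ne_of_gt he0)
    rw [div_le_div_iff₀ (by norm_num) (by linarith)]
    nlinarith
  calc (∫ x, (f x - g x) ^ 2 / g x ∂μ)
      ≤ Real.exp (-ε) * (e - 1) * (e + 1) * ((1 / 2) * S) := hfirst
    _ ≤ Real.exp (-ε) * (e - 1) ^ 2 := by
        have h1 : (0:ℝ) ≤ Real.exp (-ε) * (e - 1) * (e + 1) :=
          mul_nonneg (mul_nonneg (Real.exp_pos _).le (by linarith)) (by linarith)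
        have h2 : (1 / 2) * S ≤ (e - 1) / (e + 1) := by linarith
        calc Real.exp (-ε) * (e - 1) * (e + 1) * ((1 / 2) * S)
            ≤ Real.exp (-ε) * (e - 1) * (e + 1) * ((e - 1) / (e + 1)) :=
              mul_le_mul_of_nonneg_left h2 h1
          _ = Real.exp (-ε) * (e - 1) ^ 2 := by
              field_simp
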